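/- Let j > 0, δ > 0 and let u, v ∈ 𝓤_δ. Then for every k ∈ ℕ the barrier maps are contractions in total variation: |S^{(δ,−)}_{kδ}(u) − S^{(δ,−)}_{kδ}(v)|₁ ≤ |u − v|₁ and |S^{(δ,+)}_{kδ}(u) − S^{(δ,+)}_{kδ}(v)|₁ ≤ |u − v|₁. -/

import Mathlib

open MeasureTheory Set Filter

noncomputable section

/-- An element of the space `𝓤`: an atom `u.1 ≥ 0` at the origin together with a
density `u.2` on `ℝ₊`, representing the measure `u.1 δ₀ + u.2 dr`. -/
abbrev UEl := ℝ × (ℝ → ℝ)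

/-- Membership in `𝓤`: nonnegative atom, nonnegative density which is in
`L¹(ℝ₊) ∩ L^∞(ℝ₊)`. -/
def memU (u : UEl) : Prop :=
  0 ≤ u.1 ∧ (∀ r, 0 ≤ u.2 r) ∧
    Integrable u.2 (volume.restrict (Set.Ioi (0:ℝ))) ∧
    ∃ M : ℝ, ∀ r, u.2 r ≤ M

/-- The tail function `F(r; u) = c_u 𝟙_{{0}}(r) + ∫_r^∞ ρ_u`. -/
def tailF (u : UEl) (r : ℝ) : ℝ :=
  (if r = 0 then u.1 else 0) + ∫ x in Set.Ioi r, u.2 x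

/-- Total variation distance `|u − v|₁ = |c_u − c_v| + ∫₀^∞ |ρ_u − ρ_v|`. -/
def dist1 (u v : UEl) : ℝ :=
  |u.1 - v.1| + ∫ r in Set.Ioi (0:ℝ), |u.2 r - v.2 r|

/-- Membership in `𝓤_δ`: in `𝓤` and the density has mass `> jδ`. -/
def memUdelta (j δ : ℝ) (u : UEl) : Prop :=
  memU u ∧ j * δ < ∫ r in Set.Ioi (0:ℝ), u.2 r

/-- `R_δ(u) = inf {r ≥ 0 : F(r; u) = jδ}`. -/
def Rdelta (j δ : ℝ) (u : UEl) : ℝ :=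
  sInf {r : ℝ | 0 ≤ r ∧ tailF u r = j * δ}

/-- The cut-and-paste operator `K^{(δ)} u = (jδ, ρ_u 𝟙_{[0, R_δ(u)]})`. -/
def cutPaste (j δ : ℝ) (u : UEl) : UEl :=
  (j * δ, Set.indicator (Set.Icc 0 (Rdelta j δ u)) u.2)

/-- The Neumann heat kernel on `ℝ₊`. -/
def Gneum (t r r' : ℝ) : ℝ :=
  (Real.sqrt (2 * Real.pi * t))⁻¹ *
    (Real.exp (-(r - r')^2 / (2*t)) + Real.exp (-(r + r')^2 / (2*t)))

/-- The Neumann heat semigroup acting on `𝓤`: the result has zero atom and density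
`r ↦ c_u G_t(r,0) + ∫₀^∞ G_t(r,r') ρ_u(r') dr'`. -/
def heat (t : ℝ) (u : UEl) : UEl :=
  (0, fun r => u.1 * Gneum t r 0 + ∫ r' in Set.Ioi (0:ℝ), Gneum t r r' * u.2 r')

/-- Mass-transport partial order: `u ≤ v` iff `F(r;u) ≤ F(r;v)` for all `r ≥ 0`. -/
def Ule (u v : UEl) : Prop := ∀ r : ℝ, 0 ≤ r → tailF u r ≤ tailF v r

/-- Partial order modulo `m`: `F(r;u) ≤ F(r;v) + m` for all `r ≥ 0`. -/
def UleMod (u v : UEl) (m : ℝ) : Prop :=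
  ∀ r : ℝ, 0 ≤ r → tailF u r ≤ tailF v r + m

/-- The lower barrier `S^{(δ,−)}_{kδ}(u)`. -/
def Sminus (j δ : ℝ) (u : UEl) : ℕ → UEl
  | 0 => u
  | k+1 => cutPaste j δ (heat δ (Sminus j δ u k))

/-- The upper barrier `S^{(δ,+)}_{kδ}(u)`. -/
def Splus (j δ : ℝ) (u : UEl) : ℕ → UEl
  | 0 => u
  | k+1 => heat δ (cutPaste j δ (Splus j δ u k))

/-- A nonnegative density in `L¹(ℝ₊) ∩ L^∞(ℝ₊)`. -/
def goodFn (u : ℝ → ℝ) : Prop :=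
  (∀ r, 0 ≤ u r) ∧ Integrable u (volume.restrict (Set.Ioi (0:ℝ))) ∧
    ∃ M : ℝ, ∀ r, u r ≤ M

/-- Mass-transport order on densities: `∫_r^∞ u ≤ ∫_r^∞ v` for all `r ≥ 0`. -/
def fnLe (u v : ℝ → ℝ) : Prop :=
  ∀ r : ℝ, 0 ≤ r → (∫ x in Set.Ioi r, u x) ≤ ∫ x in Set.Ioi r, v x

end

section Aux

variable {t : ℝ}

lemma aux_Gneum_eq (t r r' : ℝ) :
    Gneum t r r' = (Real.sqrt (2*Real.pi*t))⁻¹ *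
      (Real.exp (-(1/(2*t)) * (r-r')^2) + Real.exp (-(1/(2*t)) * (r+r')^2)) := by
  have h : ∀ x : ℝ, -x^2/(2*t) = -(1/(2*t)) * x^2 := fun x => by ring
  simp only [Gneum, h]

lemma aux_Gneum_nonneg (t r r' : ℝ) : 0 ≤ Gneum t r r' := by
  rw [aux_Gneum_eq]; positivity

lemma aux_Gneum_le (ht : 0 < t) (r r' : ℝ) :
    Gneum t r r' ≤ 2 * (Real.sqrt (2*Real.pi*t))⁻¹ := by
  rw [aux_Gneum_eq]
  have hb : (0:ℝ) < 1/(2*t) := by positivity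
  have h1 : Real.exp (-(1/(2*t)) * (r-r')^2) ≤ 1 := by
    rw [Real.exp_le_one_iff]
    have : (0:ℝ) ≤ 1/(2*t) * (r-r')^2 := by positivity
    linarith
  have h2 : Real.exp (-(1/(2*t)) * (r+r')^2) ≤ 1 := by
    rw [Real.exp_le_one_iff]
    have : (0:ℝ) ≤ 1/(2*t) * (r+r')^2 := by positivity
    linarith
  have hc : (0:ℝ) ≤ (Real.sqrt (2*Real.pi*t))⁻¹ := by positivity
  nlinarith

lemma aux_gauss_integrable (ht : 0 < t) (a : ℝ) :
    Integrable (fun r : ℝ => Real.exp (-(1/(2*t)) * (r - a)^2)) volume :=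
  (integrable_exp_neg_mul_sq (by positivity)).comp_sub_right a

lemma aux_gauss_integrable' (ht : 0 < t) (a : ℝ) :
    Integrable (fun r : ℝ => Real.exp (-(1/(2*t)) * (r + a)^2)) volume := by
  simpa [sub_neg_eq_add] using aux_gauss_integrable ht (-a)

lemma aux_Gneum_integrable (ht : 0 < t) (a : ℝ) :
    Integrable (fun r => Gneum t r a) volume := by
  simp only [aux_Gneum_eq]
  exact ((aux_gauss_integrable ht a).add (aux_gauss_integrable' ht a)).const_mul _

lemma aux_Gneum_mass (ht : 0 < t) {a : ℝ} (ha : 0 ≤ a) :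
    ∫ r in Set.Ioi (0:ℝ), Gneum t r a = 1 := by
  have hπ : 0 < 2 * Real.pi * t := by positivity
  have hint := aux_gauss_integrable ht a
  have h2 : ∫ r in Set.Ioi (0:ℝ), Real.exp (-(1/(2*t)) * (r+a)^2)
      = ∫ x in Set.Iic (0:ℝ), Real.exp (-(1/(2*t)) * (x-a)^2) := by
    have h := integral_comp_neg_Ioi (0:ℝ) (fun x => Real.exp (-(1/(2*t)) * (x-a)^2))
    simp only [neg_zero] at h
    rw [← h]
    apply setIntegral_congr_fun measurableSet_Ioi
    intro x _
    have hx : (-x - a)^2 = (x + a)^2 := by ring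
    simp only [hx]
  have h3 : (∫ x in Set.Iic (0:ℝ), Real.exp (-(1/(2*t)) * (x-a)^2))
      + ∫ x in Set.Ioi (0:ℝ), Real.exp (-(1/(2*t)) * (x-a)^2)
      = ∫ x : ℝ, Real.exp (-(1/(2*t)) * (x-a)^2) := by
    have h := MeasureTheory.integral_add_compl (measurableSet_Iic (a := (0:ℝ))) hint
    rwa [Set.compl_Iic] at h
  have h4 : ∫ x : ℝ, Real.exp (-(1/(2*t)) * (x-a)^2) = Real.sqrt (2*Real.pi*t) := by
    have h5 : (∫ x : ℝ, Real.exp (-(1/(2*t)) * (x-a)^2))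
        = ∫ x : ℝ, Real.exp (-(1/(2*t)) * x^2) :=
      integral_sub_right_eq_self (fun y : ℝ => Real.exp (-(1/(2*t)) * y^2)) a
    rw [h5, integral_gaussian]
    congr 1
    field_simp
  simp only [aux_Gneum_eq]
  rw [integral_const_mul,
    MeasureTheory.integral_add (hint.restrict) ((aux_gauss_integrable' ht a).restrict),
    h2, add_comm, h3, h4]
  exact inv_mul_cancel₀ (Real.sqrt_pos.mpr hπ).ne'

end Aux


section Aux2

variable {j δ : ℝ}

lemma aux_integral_Ioi_split {f : ℝ → ℝ} {a b : ℝ} (hab : a ≤ b)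
    (hf : IntegrableOn f (Set.Ioi a) volume) :
    ∫ x in Set.Ioi a, f x = (∫ x in Set.Ioc a b, f x) + ∫ x in Set.Ioi b, f x := by
  rw [← Set.Ioc_union_Ioi_eq_Ioi hab,
    setIntegral_union (Set.Ioc_disjoint_Ioi le_rfl) measurableSet_Ioi
      (hf.mono_set Set.Ioc_subset_Ioi_self) (hf.mono_set (Set.Ioi_subset_Ioi hab))]

/-- The invariant preserved along the barrier iterations (weak form). -/
def QInv (j δ : ℝ) (u : UEl) : Prop :=
  0 ≤ u.1 ∧ (∀ r, 0 ≤ u.2 r) ∧ Integrable u.2 (volume.restrict (Set.Ioi (0:ℝ))) ∧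
    j * δ < u.1 + ∫ r in Set.Ioi (0:ℝ), u.2 r

/-- The invariant, strong form: the density alone has mass `> jδ`. -/
def QInv' (j δ : ℝ) (u : UEl) : Prop :=
  0 ≤ u.1 ∧ (∀ r, 0 ≤ u.2 r) ∧ Integrable u.2 (volume.restrict (Set.Ioi (0:ℝ))) ∧
    j * δ < ∫ r in Set.Ioi (0:ℝ), u.2 r

lemma QInv'.toQInv {u : UEl} (h : QInv' j δ u) : QInv j δ u :=
  ⟨h.1, h.2.1, h.2.2.1, lt_of_lt_of_le h.2.2.2 (le_add_of_nonneg_left h.1)⟩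

/-- Specification of `Rdelta`: it is nonnegative and the density tail there equals `jδ`. -/
lemma aux_Rdelta_spec (hjδ : 0 < j * δ) {u : UEl} (hu : QInv' j δ u) :
    0 ≤ Rdelta j δ u ∧ ∫ x in Set.Ioi (Rdelta j δ u), u.2 x = j * δ := by
  obtain ⟨hc, hρ, hint, hm⟩ := hu
  set ρ' : ℝ → ℝ := (Set.Ioi (0:ℝ)).indicator u.2 with hρ'
  have hρ'int : Integrable ρ' volume := (integrable_indicator_iff measurableSet_Ioi).2 hint
  set T : ℝ → ℝ := fun r => ∫ x in Set.Ioi r, ρ' x with hTdef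
  have hTeq : ∀ r : ℝ, 0 ≤ r → T r = ∫ x in Set.Ioi r, u.2 x := by
    intro r hr
    exact setIntegral_congr_fun measurableSet_Ioi fun x hx =>
      Set.indicator_of_mem (show x ∈ Set.Ioi (0:ℝ) from lt_of_le_of_lt hr hx) u.2
  have hT : ∀ r : ℝ, T r = (∫ x : ℝ, ρ' x) -
      ((∫ x in Set.Iic (0:ℝ), ρ' x) + ∫ x in (0:ℝ)..r, ρ' x) := by
    intro r
    have h1 : (∫ x in Set.Iic r, ρ' x) + T r = ∫ x : ℝ, ρ' x := by
      have h := MeasureTheory.integral_add_compl (measurableSet_Iic (a := r)) hρ'int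
      rwa [Set.compl_Iic] at h
    have h2 : (∫ x in Set.Iic r, ρ' x) - ∫ x in Set.Iic (0:ℝ), ρ' x
        = ∫ x in (0:ℝ)..r, ρ' x :=
      intervalIntegral.integral_Iic_sub_Iic hρ'int.integrableOn hρ'int.integrableOn
    linarith
  have hcont : Continuous T := by
    have : T = fun r => (∫ x : ℝ, ρ' x) -
        ((∫ x in Set.Iic (0:ℝ), ρ' x) + ∫ x in (0:ℝ)..r, ρ' x) := funext hT
    rw [this]
    exact continuous_const.sub (continuous_const.add
      (intervalIntegral.continuous_primitive (fun a b => hρ'int.intervalIntegrable) 0))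
  have hIic0 : (∫ x in Set.Iic (0:ℝ), ρ' x) + ∫ x in Set.Ioi (0:ℝ), ρ' x = ∫ x : ℝ, ρ' x := by
    have h := MeasureTheory.integral_add_compl (measurableSet_Iic (a := (0:ℝ))) hρ'int
    rwa [Set.compl_Iic] at h
  have hlim : Tendsto T atTop (nhds 0) := by
    have hg : Tendsto (fun r : ℝ => ∫ x in (0:ℝ)..r, ρ' x) atTop
        (nhds (∫ x in Set.Ioi (0:ℝ), ρ' x)) :=
      MeasureTheory.intervalIntegral_tendsto_integral_Ioi 0 hρ'int.integrableOn tendsto_id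
    have := (tendsto_const_nhds (x := ∫ x : ℝ, ρ' x) (f := atTop)).sub
      ((tendsto_const_nhds (x := ∫ x in Set.Iic (0:ℝ), ρ' x) (f := atTop)).add hg)
    have heq : (∫ x : ℝ, ρ' x) -
        ((∫ x in Set.Iic (0:ℝ), ρ' x) + ∫ x in Set.Ioi (0:ℝ), ρ' x) = 0 := by
      rw [hIic0]; ring
    rw [heq] at this
    exact this.congr (fun r => (hT r).symm)
  have hT0 : j * δ < T 0 := by rw [hTeq 0 le_rfl]; exact hm
  obtain ⟨b, hTb, hb0⟩ : ∃ b : ℝ, T b < j * δ ∧ 0 ≤ b := by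
    have h := (hlim.eventually_lt_const hjδ).and (eventually_ge_atTop (0:ℝ))
    exact h.exists
  obtain ⟨r0, hr0mem, hr0T⟩ := intermediate_value_Icc' hb0 hcont.continuousOn
    (Set.mem_Icc.mpr ⟨hTb.le, hT0.le⟩)
  have hset : {r : ℝ | 0 ≤ r ∧ tailF u r = j * δ} = {r : ℝ | 0 ≤ r ∧ T r = j * δ} := by
    ext x
    simp only [Set.mem_setOf_eq, tailF]
    constructor
    · rintro ⟨hx, hx2⟩
      rcases eq_or_lt_of_le hx with h0 | h0
      · exfalso
        rw [← h0] at hx2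
        norm_num at hx2
        linarith [hTeq 0 le_rfl, hT0]
      · refine ⟨hx, ?_⟩
        rw [if_neg h0.ne'] at hx2
        rw [hTeq x hx]
        linarith
    · rintro ⟨hx, hx2⟩
      rcases eq_or_lt_of_le hx with h0 | h0
      · exfalso; rw [← h0] at hx2; linarith
      · refine ⟨hx, ?_⟩
        rw [if_neg h0.ne', hTeq x hx] at *
        linarith
  have hclosed : IsClosed {r : ℝ | 0 ≤ r ∧ T r = j * δ} := by
    have : {r : ℝ | 0 ≤ r ∧ T r = j * δ} = Set.Ici 0 ∩ T ⁻¹' {j * δ} := by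
      ext x; simp [Set.mem_Ici, Set.mem_preimage]
    rw [this]
    exact isClosed_Ici.inter (isClosed_singleton.preimage hcont)
  have hne : {r : ℝ | 0 ≤ r ∧ T r = j * δ}.Nonempty := ⟨r0, hr0mem.1, hr0T⟩
  have hbdd : BddBelow {r : ℝ | 0 ≤ r ∧ T r = j * δ} := ⟨0, fun x hx => hx.1⟩
  have hmem := hclosed.csInf_mem hne hbdd
  have hR : Rdelta j δ u = sInf {r : ℝ | 0 ≤ r ∧ T r = j * δ} := by
    rw [Rdelta, hset]
  rw [hR]
  exact ⟨hmem.1, by rw [← hTeq _ hmem.1]; exact hmem.2⟩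

end Aux2

section Aux3

variable {j δ : ℝ}

lemma aux_Ioi_inter_Icc {R : ℝ} (hR : 0 ≤ R) :
    Set.Ioi (0:ℝ) ∩ Set.Icc 0 R = Set.Ioc 0 R := by
  ext x
  simp only [Set.mem_inter_iff, Set.mem_Ioi, Set.mem_Icc, Set.mem_Ioc]
  exact ⟨fun ⟨h1, _, h3⟩ => ⟨h1, h3⟩, fun ⟨h1, h2⟩ => ⟨h1, h1.le, h2⟩⟩

lemma aux_cut_mass (hjδ : 0 < j * δ) {u : UEl} (hu : QInv' j δ u) :
    ∫ r in Set.Ioi (0:ℝ), (cutPaste j δ u).2 r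
      = (∫ r in Set.Ioi (0:ℝ), u.2 r) - j * δ := by
  obtain ⟨hR0, hRT⟩ := aux_Rdelta_spec hjδ hu
  have hint := hu.2.2.1
  have h1 : ∫ r in Set.Ioi (0:ℝ), (cutPaste j δ u).2 r
      = ∫ r in Set.Ioc (0:ℝ) (Rdelta j δ u), u.2 r := by
    show ∫ r in Set.Ioi (0:ℝ), (Set.Icc 0 (Rdelta j δ u)).indicator u.2 r = _
    rw [setIntegral_indicator measurableSet_Icc, aux_Ioi_inter_Icc hR0]
  have h2 := aux_integral_Ioi_split hR0 hint
  rw [h1]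
  linarith

lemma aux_cut_QInv (hjδ : 0 < j * δ) {u : UEl} (hu : QInv' j δ u) :
    QInv j δ (cutPaste j δ u) := by
  refine ⟨hjδ.le, fun r => Set.indicator_nonneg (fun x _ => hu.2.1 x) r,
    hu.2.2.1.indicator measurableSet_Icc, ?_⟩
  have := aux_cut_mass hjδ hu
  show j * δ < j * δ + _
  rw [this]
  linarith [hu.2.2.2]

lemma aux_dist1_comm (u v : UEl) : dist1 u v = dist1 v u := by
  unfold dist1
  rw [abs_sub_comm]
  congr 1
  exact integral_congr_ae (Eventually.of_forall fun r => abs_sub_comm _ _)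

lemma aux_cut_le (hjδ : 0 < j * δ) {u v : UEl} (hu : QInv' j δ u) (hv : QInv' j δ v)
    (hR : Rdelta j δ u ≤ Rdelta j δ v) :
    dist1 (cutPaste j δ u) (cutPaste j δ v) ≤ dist1 u v := by
  obtain ⟨hRu0, hRuT⟩ := aux_Rdelta_spec hjδ hu
  obtain ⟨hRv0, hRvT⟩ := aux_Rdelta_spec hjδ hv
  set Ru := Rdelta j δ u
  set Rv := Rdelta j δ v
  have hintu := hu.2.2.1
  have hintv := hv.2.2.1
  set fu : ℝ → ℝ := (Set.Icc 0 Ru).indicator u.2 with hfu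
  set fv : ℝ → ℝ := (Set.Icc 0 Rv).indicator v.2 with hfv
  have hintfu : Integrable fu (volume.restrict (Set.Ioi (0:ℝ))) :=
    hintu.indicator measurableSet_Icc
  have hintfv : Integrable fv (volume.restrict (Set.Ioi (0:ℝ))) :=
    hintv.indicator measurableSet_Icc
  have hd : dist1 (cutPaste j δ u) (cutPaste j δ v)
      = ∫ r in Set.Ioi (0:ℝ), |fu r - fv r| := by
    show |j * δ - j * δ| + (∫ r in Set.Ioi (0:ℝ), |fu r - fv r|)
      = ∫ r in Set.Ioi (0:ℝ), |fu r - fv r|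
    simp
  -- split the integral at Ru
  have hIsplit : ∫ r in Set.Ioi (0:ℝ), |fu r - fv r|
      = (∫ r in Set.Ioc (0:ℝ) Ru, |fu r - fv r|) + ∫ r in Set.Ioi Ru, |fu r - fv r| :=
    aux_integral_Ioi_split hRu0 (hintfu.sub hintfv).abs
  -- first piece
  have hp1 : ∫ r in Set.Ioc (0:ℝ) Ru, |fu r - fv r|
      = ∫ r in Set.Ioc (0:ℝ) Ru, |u.2 r - v.2 r| := by
    apply setIntegral_congr_fun measurableSet_Ioc
    intro x hx
    have hxu : x ∈ Set.Icc 0 Ru := ⟨hx.1.le, hx.2⟩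
    have hxv : x ∈ Set.Icc 0 Rv := ⟨hx.1.le, hx.2.trans hR⟩
    simp only [hfu, hfv, Set.indicator_of_mem hxu, Set.indicator_of_mem hxv]
  -- second piece
  have hp2 : ∫ r in Set.Ioi Ru, |fu r - fv r| = ∫ r in Set.Ioi Ru, fv r := by
    apply setIntegral_congr_fun measurableSet_Ioi
    intro x hx
    have hxu : x ∉ Set.Icc 0 Ru := fun h => absurd h.2 (not_le.mpr hx)
    simp only [hfu, Set.indicator_of_notMem hxu, zero_sub, abs_neg]
    exact abs_of_nonneg (Set.indicator_nonneg (fun y _ => hv.2.1 y) x)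
  have hp2' : ∫ r in Set.Ioi Ru, fv r = ∫ r in Set.Ioc Ru Rv, v.2 r := by
    have hset : Set.Ioi Ru ∩ Set.Icc 0 Rv = Set.Ioc Ru Rv := by
      ext x
      simp only [Set.mem_inter_iff, Set.mem_Ioi, Set.mem_Icc, Set.mem_Ioc]
      exact ⟨fun ⟨h1, _, h3⟩ => ⟨h1, h3⟩, fun ⟨h1, h2⟩ => ⟨h1, (hRu0.trans h1.le), h2⟩⟩
    rw [hfv, setIntegral_indicator measurableSet_Icc, hset]
  -- tail computation
  have hvsplit : ∫ x in Set.Ioi Ru, v.2 x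
      = (∫ x in Set.Ioc Ru Rv, v.2 x) + ∫ x in Set.Ioi Rv, v.2 x :=
    aux_integral_Ioi_split hR (MeasureTheory.IntegrableOn.mono_set hintv (Set.Ioi_subset_Ioi hRu0))
  have hdiff : ∫ x in Set.Ioc Ru Rv, v.2 x
      = (∫ x in Set.Ioi Ru, v.2 x) - ∫ x in Set.Ioi Ru, u.2 x := by
    rw [hRvT] at hvsplit
    rw [hRuT]
    linarith
  have habs : (∫ x in Set.Ioi Ru, v.2 x) - ∫ x in Set.Ioi Ru, u.2 x
      ≤ ∫ x in Set.Ioi Ru, |u.2 x - v.2 x| := by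
    have h1 : (∫ x in Set.Ioi Ru, v.2 x) - ∫ x in Set.Ioi Ru, u.2 x
        = ∫ x in Set.Ioi Ru, (v.2 x - u.2 x) :=
      (MeasureTheory.integral_sub (MeasureTheory.IntegrableOn.mono_set hintv (Set.Ioi_subset_Ioi hRu0))
        (MeasureTheory.IntegrableOn.mono_set hintu (Set.Ioi_subset_Ioi hRu0))).symm
    rw [h1]
    have h2 : |∫ x in Set.Ioi Ru, (v.2 x - u.2 x)| ≤ ∫ x in Set.Ioi Ru, |v.2 x - u.2 x| := by
      simpa [Real.norm_eq_abs] using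
        norm_integral_le_integral_norm (μ := volume.restrict (Set.Ioi Ru))
          (fun x => v.2 x - u.2 x)
    have h3 : (∫ x in Set.Ioi Ru, |v.2 x - u.2 x|) = ∫ x in Set.Ioi Ru, |u.2 x - v.2 x| :=
      integral_congr_ae (Eventually.of_forall fun x => abs_sub_comm _ _)
    have h4 := le_abs_self (∫ x in Set.Ioi Ru, (v.2 x - u.2 x))
    linarith
  -- total
  have hΔsplit : ∫ r in Set.Ioi (0:ℝ), |u.2 r - v.2 r|
      = (∫ r in Set.Ioc (0:ℝ) Ru, |u.2 r - v.2 r|) + ∫ r in Set.Ioi Ru, |u.2 r - v.2 r| :=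
    aux_integral_Ioi_split hRu0 (hintu.sub hintv).abs
  have hfinal : dist1 u v = |u.1 - v.1| + ∫ r in Set.Ioi (0:ℝ), |u.2 r - v.2 r| := rfl
  rw [hd, hIsplit, hp1, hp2, hp2', hfinal]
  have habs0 : (0:ℝ) ≤ |u.1 - v.1| := abs_nonneg _
  linarith [hdiff, habs, hΔsplit]

lemma aux_cut_contract (hjδ : 0 < j * δ) {u v : UEl} (hu : QInv' j δ u) (hv : QInv' j δ v) :
    dist1 (cutPaste j δ u) (cutPaste j δ v) ≤ dist1 u v := by
  rcases le_total (Rdelta j δ u) (Rdelta j δ v) with h | h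
  · exact aux_cut_le hjδ hu hv h
  · rw [aux_dist1_comm, aux_dist1_comm u v]
    exact aux_cut_le hjδ hv hu h

end Aux3


section Aux4
set_option maxHeartbeats 1000000

variable {t : ℝ}

lemma aux_Gneum_continuous (ht : 0 < t) :
    Continuous fun p : ℝ × ℝ => Gneum t p.1 p.2 := by
  unfold Gneum
  fun_prop

lemma aux_heat_prod_integrable (ht : 0 < t) {f : ℝ → ℝ}
    (hf : Integrable f (volume.restrict (Set.Ioi (0:ℝ)))) :
    Integrable (fun p : ℝ × ℝ => Gneum t p.1 p.2 * f p.2)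
      ((volume.restrict (Set.Ioi (0:ℝ))).prod (volume.restrict (Set.Ioi (0:ℝ)))) := by
  have hmeas : AEStronglyMeasurable (fun p : ℝ × ℝ => Gneum t p.1 p.2 * f p.2)
      ((volume.restrict (Set.Ioi (0:ℝ))).prod (volume.restrict (Set.Ioi (0:ℝ)))) :=
    ((aux_Gneum_continuous ht).aestronglyMeasurable).mul hf.1.comp_snd
  rw [integrable_prod_iff' hmeas]
  refine ⟨Eventually.of_forall fun r' => ?_, ?_⟩
  · simp only
    exact ((aux_Gneum_integrable ht r').restrict).mul_const _
  · simp only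
    apply hf.abs.congr
    apply Eventually.mono (ae_restrict_mem measurableSet_Ioi)
    intro r' hr'
    have h1 : ∀ r : ℝ, ‖Gneum t r r' * f r'‖ = Gneum t r r' * |f r'| := by
      intro r
      rw [Real.norm_eq_abs, abs_mul, abs_of_nonneg (aux_Gneum_nonneg t r r')]
    calc |f r'| = (∫ r in Set.Ioi (0:ℝ), Gneum t r r') * |f r'| := by
          rw [aux_Gneum_mass ht (le_of_lt hr'), one_mul]
      _ = ∫ r in Set.Ioi (0:ℝ), Gneum t r r' * |f r'| := (integral_mul_const _ _).symm
      _ = ∫ r in Set.Ioi (0:ℝ), ‖Gneum t r r' * f r'‖ := by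
          exact integral_congr_ae (Eventually.of_forall fun r => (h1 r).symm)

lemma aux_heat_conv_integrable (ht : 0 < t) {f : ℝ → ℝ}
    (hf : Integrable f (volume.restrict (Set.Ioi (0:ℝ)))) :
    Integrable (fun r => ∫ r' in Set.Ioi (0:ℝ), Gneum t r r' * f r')
      (volume.restrict (Set.Ioi (0:ℝ))) :=
  (aux_heat_prod_integrable ht hf).integral_prod_left

lemma aux_heat_conv_mass (ht : 0 < t) {f : ℝ → ℝ}
    (hf : Integrable f (volume.restrict (Set.Ioi (0:ℝ)))) :
    ∫ r in Set.Ioi (0:ℝ), ∫ r' in Set.Ioi (0:ℝ), Gneum t r r' * f r'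
      = ∫ r' in Set.Ioi (0:ℝ), f r' := by
  rw [integral_integral_swap (aux_heat_prod_integrable ht hf)]
  apply integral_congr_ae
  filter_upwards [ae_restrict_mem measurableSet_Ioi] with r' hr'
  rw [integral_mul_const, aux_Gneum_mass ht (le_of_lt hr'), one_mul]

lemma aux_heat_dens_integrable (ht : 0 < t) {u : UEl}
    (hf : Integrable u.2 (volume.restrict (Set.Ioi (0:ℝ)))) :
    Integrable (heat t u).2 (volume.restrict (Set.Ioi (0:ℝ))) := by
  apply Integrable.add
  · exact ((aux_Gneum_integrable ht 0).restrict).const_mul u.1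
  · exact aux_heat_conv_integrable ht hf

lemma aux_heat_mass (ht : 0 < t) {u : UEl}
    (hf : Integrable u.2 (volume.restrict (Set.Ioi (0:ℝ)))) :
    ∫ r in Set.Ioi (0:ℝ), (heat t u).2 r = u.1 + ∫ r in Set.Ioi (0:ℝ), u.2 r := by
  show ∫ r in Set.Ioi (0:ℝ),
      (u.1 * Gneum t r 0 + ∫ r' in Set.Ioi (0:ℝ), Gneum t r r' * u.2 r') = _
  rw [MeasureTheory.integral_add (((aux_Gneum_integrable ht 0).restrict).const_mul u.1)
    (aux_heat_conv_integrable ht hf), integral_const_mul,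
    aux_Gneum_mass ht le_rfl, mul_one, aux_heat_conv_mass ht hf]

lemma aux_heat_contract (ht : 0 < t) {u v : UEl}
    (hf : Integrable u.2 (volume.restrict (Set.Ioi (0:ℝ))))
    (hg : Integrable v.2 (volume.restrict (Set.Ioi (0:ℝ)))) :
    dist1 (heat t u) (heat t v) ≤ dist1 u v := by
  set Δ : ℝ → ℝ := fun r => |u.2 r - v.2 r| with hΔdef
  have hΔ : Integrable Δ (volume.restrict (Set.Ioi (0:ℝ))) := (hf.sub hg).abs
  set B : ℝ → ℝ := fun r =>
    |u.1 - v.1| * Gneum t r 0 + ∫ r' in Set.Ioi (0:ℝ), Gneum t r r' * Δ r' with hBdef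
  have hBint : Integrable B (volume.restrict (Set.Ioi (0:ℝ))) :=
    (((aux_Gneum_integrable ht 0).restrict).const_mul _).add
      (aux_heat_conv_integrable ht hΔ)
  -- slice integrability
  have hslice : ∀ (w : ℝ → ℝ), Integrable w (volume.restrict (Set.Ioi (0:ℝ))) → ∀ r : ℝ,
      Integrable (fun r' => Gneum t r r' * w r') (volume.restrict (Set.Ioi (0:ℝ))) := by
    intro w hw r
    have hGc : Continuous fun r' => Gneum t r r' := by
      unfold Gneum; fun_prop
    apply hw.bdd_mul (c := 2 * (Real.sqrt (2*Real.pi*t))⁻¹) hGc.aestronglyMeasurable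
    exact Eventually.of_forall fun r' => by
      rw [Real.norm_eq_abs, abs_of_nonneg (aux_Gneum_nonneg t r r')]
      exact aux_Gneum_le ht r r'
  have hpt : ∀ r : ℝ, |(heat t u).2 r - (heat t v).2 r| ≤ B r := by
    intro r
    have hsub : (heat t u).2 r - (heat t v).2 r
        = (u.1 - v.1) * Gneum t r 0
          + ∫ r' in Set.Ioi (0:ℝ), Gneum t r r' * (u.2 r' - v.2 r') := by
      show u.1 * Gneum t r 0 + (∫ r' in Set.Ioi (0:ℝ), Gneum t r r' * u.2 r')
          - (v.1 * Gneum t r 0 + ∫ r' in Set.Ioi (0:ℝ), Gneum t r r' * v.2 r') = _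
      have hintsub : ∫ r' in Set.Ioi (0:ℝ), Gneum t r r' * (u.2 r' - v.2 r')
          = (∫ r' in Set.Ioi (0:ℝ), Gneum t r r' * u.2 r')
            - ∫ r' in Set.Ioi (0:ℝ), Gneum t r r' * v.2 r' := by
        rw [← MeasureTheory.integral_sub (hslice u.2 hf r) (hslice v.2 hg r)]
        refine integral_congr_ae (Eventually.of_forall fun r' => ?_)
        ring
      rw [hintsub]
      ring
    rw [hsub]
    refine le_trans (abs_add_le _ _) ?_
    have h1 : |(u.1 - v.1) * Gneum t r 0| = |u.1 - v.1| * Gneum t r 0 := by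
      rw [abs_mul, abs_of_nonneg (aux_Gneum_nonneg t r 0)]
    have h2 : |∫ r' in Set.Ioi (0:ℝ), Gneum t r r' * (u.2 r' - v.2 r')|
        ≤ ∫ r' in Set.Ioi (0:ℝ), Gneum t r r' * Δ r' := by
      have ha : |∫ r' in Set.Ioi (0:ℝ), Gneum t r r' * (u.2 r' - v.2 r')|
          ≤ ∫ r' in Set.Ioi (0:ℝ), |Gneum t r r' * (u.2 r' - v.2 r')| := by
        simpa only [Real.norm_eq_abs] using
          norm_integral_le_integral_norm (μ := volume.restrict (Set.Ioi (0:ℝ)))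
            (fun r' => Gneum t r r' * (u.2 r' - v.2 r'))
      have hb : (∫ r' in Set.Ioi (0:ℝ), |Gneum t r r' * (u.2 r' - v.2 r')|)
          = ∫ r' in Set.Ioi (0:ℝ), Gneum t r r' * Δ r' := by
        refine integral_congr_ae (Eventually.of_forall fun r' => ?_)
        simp only [hΔdef]
        rw [abs_mul, abs_of_nonneg (aux_Gneum_nonneg t r r')]
      linarith
    rw [hBdef, h1]
    simp only
    linarith
  have hd1 : dist1 (heat t u) (heat t v)
      = ∫ r in Set.Ioi (0:ℝ), |(heat t u).2 r - (heat t v).2 r| := by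
    show |(0:ℝ) - 0| + _ = _
    simp
  have hmono : (∫ r in Set.Ioi (0:ℝ), |(heat t u).2 r - (heat t v).2 r|)
      ≤ ∫ r in Set.Ioi (0:ℝ), B r :=
    integral_mono (((aux_heat_dens_integrable ht hf).sub
      (aux_heat_dens_integrable ht hg)).abs) hBint hpt
  have hBval : ∫ r in Set.Ioi (0:ℝ), B r = |u.1 - v.1| + ∫ r in Set.Ioi (0:ℝ), Δ r := by
    rw [hBdef]
    rw [MeasureTheory.integral_add (((aux_Gneum_integrable ht 0).restrict).const_mul _)
      (aux_heat_conv_integrable ht hΔ), integral_const_mul,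
      aux_Gneum_mass ht le_rfl, mul_one, aux_heat_conv_mass ht hΔ]
  have : dist1 u v = |u.1 - v.1| + ∫ r in Set.Ioi (0:ℝ), Δ r := rfl
  rw [hd1, this, ← hBval]
  exact hmono

end Aux4


section AuxInv
set_option maxHeartbeats 1000000

variable {j δ : ℝ}

lemma aux_heat_QInv' (hδ : 0 < δ) {u : UEl} (hu : QInv j δ u) :
    QInv' j δ (heat δ u) := by
  obtain ⟨hc, hρ, hint, hm⟩ := hu
  refine ⟨le_rfl, fun r => ?_, aux_heat_dens_integrable hδ hint, ?_⟩
  · refine add_nonneg (mul_nonneg hc (aux_Gneum_nonneg δ r 0)) ?_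
    exact integral_nonneg fun r' => mul_nonneg (aux_Gneum_nonneg δ r r') (hρ r')
  · rw [aux_heat_mass hδ hint]
    exact hm

lemma aux_Sminus_QInv (hjδ : 0 < j * δ) (hδ : 0 < δ) {u : UEl}
    (hu : memUdelta j δ u) : ∀ k : ℕ, QInv j δ (Sminus j δ u k) := by
  intro k
  induction k with
  | zero =>
    exact ⟨hu.1.1, hu.1.2.1, hu.1.2.2.1,
      lt_of_lt_of_le hu.2 (le_add_of_nonneg_left hu.1.1)⟩
  | succ k ih =>
    show QInv j δ (cutPaste j δ (heat δ (Sminus j δ u k)))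
    exact aux_cut_QInv hjδ (aux_heat_QInv' hδ ih)

lemma aux_Splus_QInv' (hjδ : 0 < j * δ) (hδ : 0 < δ) {u : UEl}
    (hu : memUdelta j δ u) : ∀ k : ℕ, QInv' j δ (Splus j δ u k) := by
  intro k
  induction k with
  | zero => exact ⟨hu.1.1, hu.1.2.1, hu.1.2.2.1, hu.2⟩
  | succ k ih =>
    show QInv' j δ (heat δ (cutPaste j δ (Splus j δ u k)))
    exact aux_heat_QInv' hδ (aux_cut_QInv hjδ ih)

end AuxInv

/-- the barrier maps are contractions in total variation. -/
theorem barriers_contraction (j δ : ℝ) (hj : 0 < j) (hδ : 0 < δ)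
    (u v : UEl) (hu : memUdelta j δ u) (hv : memUdelta j δ v) :
    ∀ k : ℕ,
      dist1 (Sminus j δ u k) (Sminus j δ v k) ≤ dist1 u v ∧
      dist1 (Splus j δ u k) (Splus j δ v k) ≤ dist1 u v := by
  have hjδ : 0 < j * δ := mul_pos hj hδ
  intro k
  induction k with
  | zero => exact ⟨le_rfl, le_rfl⟩
  | succ k ih =>
    obtain ⟨ihm, ihp⟩ := ih
    constructor
    · show dist1 (cutPaste j δ (heat δ (Sminus j δ u k)))
          (cutPaste j δ (heat δ (Sminus j δ v k))) ≤ dist1 u v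
      have hqu := aux_Sminus_QInv hjδ hδ hu k
      have hqv := aux_Sminus_QInv hjδ hδ hv k
      calc dist1 (cutPaste j δ (heat δ (Sminus j δ u k)))
            (cutPaste j δ (heat δ (Sminus j δ v k)))
          ≤ dist1 (heat δ (Sminus j δ u k)) (heat δ (Sminus j δ v k)) :=
            aux_cut_contract hjδ (aux_heat_QInv' hδ hqu) (aux_heat_QInv' hδ hqv)
        _ ≤ dist1 (Sminus j δ u k) (Sminus j δ v k) :=
            aux_heat_contract hδ hqu.2.2.1 hqv.2.2.1
        _ ≤ dist1 u v := ihm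
    · show dist1 (heat δ (cutPaste j δ (Splus j δ u k)))
          (heat δ (cutPaste j δ (Splus j δ v k))) ≤ dist1 u v
      have hqu := aux_Splus_QInv' hjδ hδ hu k
      have hqv := aux_Splus_QInv' hjδ hδ hv k
      calc dist1 (heat δ (cutPaste j δ (Splus j δ u k)))
            (heat δ (cutPaste j δ (Splus j δ v k)))
          ≤ dist1 (cutPaste j δ (Splus j δ u k)) (cutPaste j δ (Splus j δ v k)) :=
            aux_heat_contract hδ (aux_cut_QInv hjδ hqu).2.2.1 (aux_cut_QInv hjδ hqv).2.2.1
        _ ≤ dist1 (Splus j δ u k) (Splus j δ v k) :=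
            aux_cut_contract hjδ hqu hqv
        _ ≤ dist1 u v := ihp
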